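/- Let X be a random variable taking non-negative integer values, let α > 0, and suppose P(X = k+1) ≤ (α/(k+1))·P(X = k) for all k ≥ 0. Then X is stochastically at most a Poisson random variable with mean α; that is, P(X ≥ t) ≤ P(Po(α) ≥ t) for every non-negative integer t. -/

import Mathlib

open scoped Classical

/-- Number of connected components of a graph. -/
noncomputable def kappa {V : Type*} (G : SimpleGraph V) : ℕ :=
  Nat.card G.ConnectedComponent

/-- Number of bridges of a graph. -/
noncomputable def numBridges {V : Type*} (G : SimpleGraph V) : ℕ :=
  {e : Sym2 V | G.IsBridge e}.ncard

/-- Number of unordered pairs of vertices lying in distinct components. -/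
noncomputable def cross {V : Type*} (G : SimpleGraph V) : ℕ :=
  {p : Sym2 V | ∃ u v : V, p = s(u, v) ∧ ¬ G.Reachable u v}.ncard

/-- Number of vertices outside a largest component. -/
noncomputable def frag {V : Type*} [Fintype V] (G : SimpleGraph V) : ℕ :=
  Fintype.card V - ⨆ c : G.ConnectedComponent, c.supp.ncard

/-- The graph obtained by deleting all bridges. -/
def debridge {V : Type*} (G : SimpleGraph V) : SimpleGraph V :=
  G.deleteEdges {e : Sym2 V | G.IsBridge e}

/-- The weight τ(G) = f(G̃) · λ^{e₀(G)} · ν^{κ(G)}. -/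
noncomputable def tau {V : Type*} (f : SimpleGraph V → ℝ) (lam nu : ℝ)
    (G : SimpleGraph V) : ℝ :=
  f (debridge G) * lam ^ numBridges G * nu ^ kappa G

/-- Adding the edge uv to a graph. -/
def addEdge {V : Type*} (G : SimpleGraph V) (u v : V) : SimpleGraph V :=
  G ⊔ SimpleGraph.fromEdgeSet {s(u, v)}

/-- A class of graphs is bridge-addable if adding an edge between two vertices in
distinct components of a member yields a member. -/
def BridgeAddable {V : Type*} (A : Set (SimpleGraph V)) : Prop :=
  ∀ G ∈ A, ∀ u v : V, ¬ G.Reachable u v → addEdge G u v ∈ A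

/-- P(Po(α) ≥ t), the upper tail of a Poisson distribution with mean α. -/
noncomputable def poissonTail (α : ℝ) (t : ℕ) : ℝ :=
  ∑' i : ℕ, if t ≤ i then Real.exp (-α) * α ^ i / (Nat.factorial i) else 0

/-- if a nonnegative-integer-valued random variable `X` (with
distribution `p`) satisfies `P(X = k+1) ≤ (α/(k+1))·P(X = k)` for all `k`, then
`X` is stochastically at most `Po(α)`. -/
theorem stmt4 (p : ℕ → ℝ) (hp : ∀ k, 0 ≤ p k) (hp1 : ∑' k, p k = 1)
    (α : ℝ) (hα : 0 < α)
    (h : ∀ k : ℕ, p (k + 1) ≤ α / (k + 1) * p k) :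
    ∀ t : ℕ, (∑' i : ℕ, if t ≤ i then p i else 0) ≤ poissonTail α t := by
  simp only [poissonTail]
  set q : ℕ → ℝ := fun i => Real.exp (-α) * α ^ i / (Nat.factorial i) with hqdef
  have hq0 : ∀ i, 0 < q i := fun i => by
    have : (0:ℝ) < (Nat.factorial i : ℝ) := by positivity
    positivity
  have hqsum : Summable q := by
    simpa [hqdef, mul_div_assoc] using (Real.summable_pow_div_factorial α).mul_left (Real.exp (-α))
  have hexp : ∑' i : ℕ, α ^ i / (Nat.factorial i) = Real.exp α := by
    rw [Real.exp_eq_exp_ℝ, NormedSpace.exp_eq_tsum_div]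
  have hqtsum : ∑' i, q i = 1 := by
    simp only [hqdef, mul_div_assoc]
    rw [tsum_mul_left, hexp, Real.exp_neg, inv_mul_cancel₀ (Real.exp_ne_zero α)]
  have hpsum : Summable p := by
    by_contra hc
    rw [tsum_eq_zero_of_not_summable hc] at hp1
    norm_num at hp1
  have hrat : ∀ j : ℕ, q (j + 1) = α / (j + 1) * q j := by
    intro j
    have hj : ((j:ℝ) + 1) ≠ 0 := by positivity
    simp only [hqdef, Nat.factorial_succ, pow_succ]
    push_cast
    field_simp
  have K : ∀ i j, i ≤ j → p j * q i ≤ p i * q j := by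
    intro i j hij
    induction j, hij using Nat.le_induction with
    | base => exact le_rfl
    | succ j hij ih =>
      have hA : (0:ℝ) ≤ α / (j + 1) := by positivity
      calc p (j + 1) * q i ≤ (α / (j + 1) * p j) * q i := by
            exact mul_le_mul_of_nonneg_right (h j) (hq0 i).le
        _ = α / (j + 1) * (p j * q i) := by ring
        _ ≤ α / (j + 1) * (p i * q j) := mul_le_mul_of_nonneg_left ih hA
        _ = p i * q (j + 1) := by rw [hrat j]; ring
  intro t
  have tail_eq : ∀ f : ℕ → ℝ, Summable f →
      (∑' i : ℕ, if t ≤ i then f i else 0)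
        = (∑' i, f i) - ∑ i ∈ Finset.range t, f i := by
    intro f hf
    have hg : Summable (fun i => if t ≤ i then f i else 0) :=
      hf.indicator {i | t ≤ i} |>.congr (by intro i; by_cases hi : t ≤ i <;>
        simp [Set.indicator, hi])
    have hh : Summable (fun i => if i < t then f i else 0) :=
      hf.indicator {i | i < t} |>.congr (by intro i; by_cases hi : i < t <;>
        simp [Set.indicator, hi])
    have hsplit : ∀ i, f i = (if t ≤ i then f i else 0) + (if i < t then f i else 0) := by
      intro i
      by_cases hi : t ≤ i
      · simp [hi, Nat.not_lt.mpr hi]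
      · simp [hi, Nat.lt_of_not_le hi]
    have hsum : ∑' i, f i = (∑' i, if t ≤ i then f i else 0) + (∑' i, if i < t then f i else 0) := by
      rw [← Summable.tsum_add hg hh]
      exact tsum_congr hsplit
    have hfin : (∑' i : ℕ, if i < t then f i else 0) = ∑ i ∈ Finset.range t, f i := by
      rw [tsum_eq_sum (s := Finset.range t) (by intro b hb; simp [Finset.mem_range] at hb; simp [hb])]
      refine Finset.sum_congr rfl ?_
      intro i hi
      simp [Finset.mem_range.mp hi]
    rw [hsum, hfin]; ring
  rcases le_total (p t) (q t) with hc | hc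
  · -- termwise on the tail
    have hterm : ∀ i, (if t ≤ i then p i else 0) ≤ (if t ≤ i then q i else 0) := by
      intro i
      by_cases hi : t ≤ i
      · simp only [hi, if_true]
        have := K t i hi
        have h2 : p i * q t ≤ q t * q i := le_trans this
          (mul_le_mul_of_nonneg_right hc (hq0 i).le)
        have := (mul_le_mul_iff_of_pos_right (hq0 t)).mp (by linarith [h2] : p i * q t ≤ q i * q t)
        exact this
      · simp [hi]
    have hgsum : Summable (fun i => if t ≤ i then p i else 0) :=
      hpsum.indicator {i | t ≤ i} |>.congr (by intro i; by_cases hi : t ≤ i <;>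
        simp [Set.indicator, hi])
    have hgsum' : Summable (fun i => if t ≤ i then q i else 0) :=
      hqsum.indicator {i | t ≤ i} |>.congr (by intro i; by_cases hi : t ≤ i <;>
        simp [Set.indicator, hi])
    exact Summable.tsum_le_tsum hterm hgsum hgsum'
  · -- head comparison
    have hpt : 0 < p t := lt_of_lt_of_le (hq0 t) hc
    have hterm : ∀ i ∈ Finset.range t, q i ≤ p i := by
      intro i hi
      have hit : i ≤ t := (Finset.mem_range.mp hi).le
      have h1 := K i t hit
      have h2 : p t * q i ≤ p i * p t := le_trans h1
        (mul_le_mul_of_nonneg_left hc (hp i))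
      have := (mul_le_mul_iff_of_pos_right hpt).mp (by linarith : q i * p t ≤ p i * p t)
      exact this
    rw [tail_eq p hpsum, tail_eq q hqsum, hp1, hqtsum]
    have := Finset.sum_le_sum hterm
    linarith
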